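/- Let λ be a partition of n and μ₁ = λ(c₁→a₁), μ₂ = λ(c₂→a₂) two distinct neighbors of λ in the partition graph G_n. Then λ, μ₁, μ₂ span a triangle in G_n if and only if c₁ = c₂ or a₁ = a₂. -/

import Mathlib

open Finset

/-- A partition of `n`: a finitely supported weakly decreasing sequence of
row lengths (rows indexed from `0`) summing to `n`. -/
structure NPartition (n : ℕ) where
  parts : ℕ →₀ ℕ
  antitone : ∀ ⦃i j : ℕ⦄, i ≤ j → parts j ≤ parts i
  total : parts.sum (fun _ m => m) = n

namespace NPartition

variable {n : ℕ}

/-- The multiset of (positive) row lengths of a partition. -/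
def rows (f : NPartition n) : Multiset ℕ := f.parts.support.val.map f.parts

/-- `conj f j` is the number of rows of length at least `j + 1`; i.e. the length of
the `(j+1)`-st column (columns indexed from `0`), the conjugate partition `λ'`. -/
def conj (f : NPartition n) (j : ℕ) : ℕ :=
  (f.rows.filter (fun m => j + 1 ≤ m)).card

/-- The height `h(λ) = ∑ i · λ_i`, rows indexed from `1`. -/
def height (f : NPartition n) : ℕ :=
  ∑ i ∈ f.parts.support, (i + 1) * f.parts i

/-- Row `r` (0-indexed) of `f` carries a removable corner: removing its last cell
again yields a partition. -/
def IsRemovableRow (f : NPartition n) (r : ℕ) : Prop :=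
  f.parts (r + 1) < f.parts r

/-- Row `r` (0-indexed) of `f` carries an addable corner: adding a cell at the end
of this row again yields a partition. -/
def IsAddableRow (f : NPartition n) (r : ℕ) : Prop :=
  r = 0 ∨ f.parts r < f.parts (r - 1)

/-- The multiset of rows obtained from `f` by removing one cell from the corner in
row `rc` and adding one cell at the corner in row `ra` (zero rows discarded);
reordering is built in since this is a multiset. -/
def transferRows (f : NPartition n) (rc ra : ℕ) : Multiset ℕ :=
  ((f.rows.erase (f.parts rc)).erase (f.parts ra))
    + Multiset.filter (fun m => 0 < m) {f.parts rc - 1, f.parts ra + 1}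

/-- `IsTransfer f g rc ra` : `g = λ(c → a)` is obtained from `f = λ` by the admissible
transfer of one cell from the removable corner `c` in row `rc` to the addable corner
`a` in row `ra ≠ rc`, followed by reordering, and `g ≠ f`. -/
def IsTransfer (f g : NPartition n) (rc ra : ℕ) : Prop :=
  f.IsRemovableRow rc ∧ f.IsAddableRow ra ∧ rc ≠ ra ∧ g ≠ f ∧
    g.rows = f.transferRows rc ra

/-- Adjacency in the partition graph `G_n`. -/
def Adj (f g : NPartition n) : Prop :=
  (∃ rc ra, IsTransfer f g rc ra) ∨ (∃ rc ra, IsTransfer g f rc ra)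

/-- The one-row partition `(n)`. -/
noncomputable def onerow (n : ℕ) : NPartition n where
  parts := Finsupp.single 0 n
  antitone := by
    intro i j hij
    by_cases hi : i = 0
    · subst hi
      by_cases hj : j = 0 <;> simp [Finsupp.single_apply, eq_comm, hj]
    · have hj : j ≠ 0 := by omega
      simp [Finsupp.single_apply, eq_comm, hi, hj]
  total := Finsupp.sum_single_index rfl

end NPartition

open Finset

namespace PartAux

/-- `FC M j` : number of elements of `M` that are `≥ j+1`. -/
def FC (M : Multiset ℕ) (j : ℕ) : ℕ := (M.filter (fun m => j + 1 ≤ m)).card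

lemma count_add_FC (M : Multiset ℕ) (j : ℕ) :
    M.count (j+1) + FC M (j+1) = FC M j := by
  induction M using Multiset.induction with
  | empty => simp [FC]
  | cons a M ih =>
    simp only [FC, Multiset.count_cons, Multiset.filter_cons, Multiset.card_add] at *
    split_ifs <;> simp_all <;> omega

/-- A multiset of positive naturals is determined by its `FC` function. -/
lemma eq_of_FC_eq {M N : Multiset ℕ} (hM : ∀ x ∈ M, 0 < x) (hN : ∀ x ∈ N, 0 < x)
    (h : ∀ j, FC M j = FC N j) : M = N := by
  ext m
  cases m with
  | zero =>
    rw [Multiset.count_eq_zero_of_notMem, Multiset.count_eq_zero_of_notMem]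
    · exact fun hm => by simpa using hN 0 hm
    · exact fun hm => by simpa using hM 0 hm
  | succ j =>
    have h1 := count_add_FC M j
    have h2 := count_add_FC N j
    have := h j; have := h (j+1); omega

/-- A downward-closed finite set of naturals is an initial range. -/
lemma lower_eq_range (S : Finset ℕ) (h : ∀ i ∈ S, ∀ k ≤ i, k ∈ S) :
    S = Finset.range S.card := by
  have hsub : Finset.range S.card ⊆ S := by
    intro i hi
    rw [Finset.mem_range] at hi
    by_contra hiS
    have hS : S ⊆ Finset.range i := by
      intro s hs
      rw [Finset.mem_range]
      by_contra hsi
      exact hiS (h s hs i (by omega))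
    have := Finset.card_le_card hS
    simp only [Finset.card_range] at this
    omega
  exact (Finset.eq_of_subset_of_card_le hsub (by simp)).symm

end PartAux
namespace NPartition

open PartAux

variable {n : ℕ}

lemma conj_eq_FC (f : NPartition n) (j : ℕ) : f.conj j = FC f.rows j := rfl

lemma rows_pos (f : NPartition n) : ∀ x ∈ f.rows, 0 < x := by
  intro x hx
  obtain ⟨i, hi, rfl⟩ := Multiset.mem_map.mp hx
  have : i ∈ f.parts.support := hi
  rw [Finsupp.mem_support_iff] at this
  omega

lemma conj_eq_card_filter (f : NPartition n) (j : ℕ) :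
    f.conj j = (f.parts.support.filter (fun i => j + 1 ≤ f.parts i)).card := by
  rw [conj, rows, Multiset.filter_map, Multiset.card_map]
  rfl

lemma lt_conj_iff (f : NPartition n) {i j : ℕ} : i < f.conj j ↔ j + 1 ≤ f.parts i := by
  rw [conj_eq_card_filter]
  set S := f.parts.support.filter (fun i => j + 1 ≤ f.parts i) with hS
  have hlow : ∀ a ∈ S, ∀ k ≤ a, k ∈ S := by
    intro a ha k hk
    rw [hS, Finset.mem_filter, Finsupp.mem_support_iff] at *
    have := f.antitone hk
    constructor <;> omega
  have hmem : i ∈ S ↔ j + 1 ≤ f.parts i := by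
    rw [hS, Finset.mem_filter, Finsupp.mem_support_iff]
    constructor
    · tauto
    · intro h; exact ⟨by omega, h⟩
  rw [← hmem, lower_eq_range S hlow, Finset.mem_range, Finset.card_range]

lemma conj_antitone (f : NPartition n) {j j' : ℕ} (h : j ≤ j') : f.conj j' ≤ f.conj j := by
  rw [conj_eq_card_filter, conj_eq_card_filter]
  apply Finset.card_le_card
  apply Finset.monotone_filter_right
  intro i hi; omega

lemma parts_ext {f g : NPartition n} (h : f.parts = g.parts) : f = g := by
  cases f; cases g; simp_all

lemma conj_ext {f g : NPartition n} (h : ∀ j, f.conj j = g.conj j) : f = g := by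
  apply parts_ext
  ext i
  have h1 : ∀ k, k + 1 ≤ f.parts i ↔ k + 1 ≤ g.parts i := by
    intro k
    rw [← lt_conj_iff, ← lt_conj_iff, h k]
  have hf := h1 (f.parts i)
  have hg := h1 (g.parts i)
  by_cases h0 : f.parts i = 0 <;> by_cases h0' : g.parts i = 0
  · omega
  · have := (h1 (g.parts i - 1)).mpr (by omega); omega
  · have := (h1 (f.parts i - 1)).mp (by omega); omega
  · have h3 := (h1 (f.parts i - 1)).mp (by omega)
    have h4 := (h1 (g.parts i - 1)).mpr (by omega)
    omega

end NPartition
namespace NPartition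

open PartAux

variable {n : ℕ}

lemma mem_rows_of_support {f : NPartition n} {r : ℕ} (hr : f.parts r ≠ 0) :
    f.parts r ∈ f.rows := by
  apply Multiset.mem_map.mpr
  exact ⟨r, Finsupp.mem_support_iff.mpr hr, rfl⟩

lemma FC_filter_pos (S : Multiset ℕ) (j : ℕ) :
    FC (S.filter (fun m => 0 < m)) j = FC S j := by
  rw [FC, FC, Multiset.filter_filter]
  congr 1
  apply Multiset.filter_congr
  intro x _
  constructor
  · tauto
  · intro h; exact ⟨h, by omega⟩

lemma FC_cons (x : ℕ) (S : Multiset ℕ) (j : ℕ) :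
    FC (x ::ₘ S) j = (if j + 1 ≤ x then 1 else 0) + FC S j := by
  rw [FC, Multiset.filter_cons, Multiset.card_add, FC]
  split_ifs <;> simp

lemma FC_pair (x y j : ℕ) : FC {x, y} j
    = (if j + 1 ≤ x then 1 else 0) + (if j + 1 ≤ y then 1 else 0) := by
  show FC (x ::ₘ y ::ₘ 0) j = _
  rw [FC_cons, FC_cons]
  simp [FC]

/-- Key computation: `FC` of `transferRows`. -/
lemma FC_transferRows (f : NPartition n) {rc ra : ℕ} (hne : rc ≠ ra)
    (hc : 1 ≤ f.parts rc) (j : ℕ) :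
    FC (f.transferRows rc ra) j
      + (if j + 1 ≤ f.parts rc then 1 else 0) + (if j + 1 ≤ f.parts ra then 1 else 0)
    = f.conj j
      + (if j + 1 ≤ f.parts rc - 1 then 1 else 0)
      + (if j + 1 ≤ f.parts ra + 1 then 1 else 0) := by
  set c := f.parts rc with hcdef
  set a := f.parts ra with hadef
  have hcmem : c ∈ f.rows := mem_rows_of_support (by omega)
  set E := (f.rows.erase c).erase a with hE
  have hnew : FC (f.transferRows rc ra) j
      = FC E j + ((if j + 1 ≤ c - 1 then 1 else 0) + (if j + 1 ≤ a + 1 then 1 else 0)) := by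
    have : f.transferRows rc ra
        = E + Multiset.filter (fun m => 0 < m) {c - 1, a + 1} := rfl
    rw [this, FC, Multiset.filter_add, Multiset.card_add]
    have h2 : (Multiset.filter (fun m => j + 1 ≤ m)
        (Multiset.filter (fun m => 0 < m) ({c - 1, a + 1} : Multiset ℕ))).card
        = (if j + 1 ≤ c - 1 then 1 else 0) + (if j + 1 ≤ a + 1 then 1 else 0) := by
      have := FC_filter_pos ({c - 1, a + 1} : Multiset ℕ) j
      rw [FC_pair] at this
      exact this
    rw [h2]
    rfl
  by_cases ha0 : a = 0
  · have h0 : (0 : ℕ) ∉ f.rows.erase c := by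
      intro h
      have := f.rows_pos 0 (Multiset.mem_of_mem_erase h)
      omega
    have hEeq : E = f.rows.erase c := by rw [hE, ha0, Multiset.erase_of_notMem h0]
    have hrows : f.rows = c ::ₘ (f.rows.erase c) := (Multiset.cons_erase hcmem).symm
    have hFCrows : f.conj j = (if j + 1 ≤ c then 1 else 0) + FC (f.rows.erase c) j := by
      rw [conj_eq_FC]
      conv_lhs => rw [hrows]
      rw [FC_cons]
    rw [hnew, hEeq, hFCrows, ha0]
    split_ifs <;> omega
  · have hamem : a ∈ f.rows.erase c := by
      by_cases hac : a = c
      · have h2 : 2 ≤ f.rows.count c := by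
          rw [rows, Multiset.count_map]
        -- count c (map parts support.val) = card of filter on support
          have hcard : 1 < (f.parts.support.filter (fun i => c = f.parts i)).card :=
            Finset.one_lt_card.mpr
              ⟨rc, Finset.mem_filter.mpr ⟨Finsupp.mem_support_iff.mpr (by omega), rfl⟩,
               ra, Finset.mem_filter.mpr ⟨Finsupp.mem_support_iff.mpr (by omega), by rw [← hac]⟩,
               hne⟩
          exact hcard
        have := Multiset.count_erase_self c f.rows
        rw [← Multiset.count_pos, hac]
        omega
      · rw [← Multiset.count_pos, Multiset.count_erase_of_ne hac, Multiset.count_pos]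
        exact mem_rows_of_support (by omega)
    have hrows : f.rows = c ::ₘ a ::ₘ E := by
      rw [hE, Multiset.cons_erase hamem, Multiset.cons_erase hcmem]
    have hFCrows : f.conj j = (if j + 1 ≤ c then 1 else 0)
        + ((if j + 1 ≤ a then 1 else 0) + FC E j) := by
      rw [conj_eq_FC, hrows, FC_cons, FC_cons]
    rw [hnew, hFCrows]
    split_ifs <;> omega

end NPartition
namespace NPartition

open PartAux

variable {n : ℕ}

lemma conj_rel_of_transfer {f g : NPartition n} {rc ra : ℕ} (h : IsTransfer f g rc ra) :
    ∀ j, g.conj j + (if j = f.parts rc - 1 then 1 else 0)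
      = f.conj j + (if j = f.parts ra then 1 else 0) := by
  obtain ⟨hrem, hadd, hne, hgf, hrows⟩ := h
  have hc : 1 ≤ f.parts rc := by
    have := hrem; rw [IsRemovableRow] at this; omega
  intro j
  have hD := FC_transferRows f hne hc j
  rw [← hrows, ← conj_eq_FC] at hD
  split_ifs at hD ⊢ <;> omega

lemma transfer_u_ne_v {f g : NPartition n} {rc ra : ℕ} (h : IsTransfer f g rc ra) :
    f.parts rc - 1 ≠ f.parts ra := by
  intro he
  apply h.2.2.2.1
  apply conj_ext
  intro j
  have hr := conj_rel_of_transfer h j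
  rw [he] at hr
  split_ifs at hr <;> omega

lemma removable_inj {f : NPartition n} {r₁ r₂ : ℕ} (h1 : f.IsRemovableRow r₁)
    (h2 : f.IsRemovableRow r₂) (he : f.parts r₁ = f.parts r₂) : r₁ = r₂ := by
  rw [IsRemovableRow] at h1 h2
  by_contra hne
  rcases Nat.lt_or_ge r₁ r₂ with h | h
  · have := f.antitone (show r₁ + 1 ≤ r₂ by omega); omega
  · have := f.antitone (show r₂ + 1 ≤ r₁ by omega); omega

lemma addable_inj {f : NPartition n} {r₁ r₂ : ℕ} (h1 : f.IsAddableRow r₁)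
    (h2 : f.IsAddableRow r₂) (he : f.parts r₁ = f.parts r₂) : r₁ = r₂ := by
  rw [IsAddableRow] at h1 h2
  by_contra hne
  rcases Nat.lt_or_ge r₁ r₂ with h | h
  · rcases h2 with h2 | h2
    · omega
    · have := f.antitone (show r₁ ≤ r₂ - 1 by omega); omega
  · rcases h1 with h1 | h1
    · omega
    · have := f.antitone (show r₂ ≤ r₁ - 1 by omega); omega

/-- Constructor: a unit column move between conjugates comes from a transfer. -/
lemma transfer_of_conj_rel {f g : NPartition n} {u v : ℕ} (huv : u ≠ v)
    (H : ∀ j, g.conj j + (if j = u then 1 else 0) = f.conj j + (if j = v then 1 else 0)) :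
    ∃ rc ra, IsTransfer f g rc ra := by
  have hfu : f.conj u = g.conj u + 1 := by
    have h := H u; split_ifs at h <;> omega
  have hgv : g.conj v = f.conj v + 1 := by
    have h := H v; split_ifs at h <;> omega
  set rc := f.conj u - 1 with hrcdef
  set ra := f.conj v with hradef
  have hpc1 : u + 1 ≤ f.parts rc := (lt_conj_iff f).mp (show rc < f.conj u by omega)
  have key : f.conj (u + 1) < f.conj u := by
    have h1 := H (u + 1)
    have h2 : g.conj (u + 1) ≤ g.conj u := conj_antitone g (by omega)
    have h3 : f.conj (u + 1) ≤ f.conj u := conj_antitone f (by omega)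
    by_contra hk
    split_ifs at h1 <;> omega
  have hpc2 : f.parts rc ≤ u + 1 := by
    by_contra hcon
    have := (lt_conj_iff f (i := rc) (j := u + 1)).mpr (by omega)
    omega
  have hrem : f.IsRemovableRow rc := by
    rw [IsRemovableRow]
    have h6 : ¬ (u + 1 ≤ f.parts (rc + 1)) := by
      intro hcon
      have := (lt_conj_iff f).mpr hcon
      omega
    omega
  have hpa2 : f.parts ra ≤ v := by
    by_contra hcon
    have := (lt_conj_iff f (i := ra) (j := v)).mpr (by omega)
    omega
  have hpa1 : v ≤ f.parts ra := by
    rcases Nat.eq_zero_or_pos v with hv0 | hv0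
    · omega
    · have vkey : f.conj v < f.conj (v - 1) := by
        have h1 := H (v - 1)
        have h2 : g.conj v ≤ g.conj (v - 1) := conj_antitone g (by omega)
        have h3 : f.conj v ≤ f.conj (v - 1) := conj_antitone f (by omega)
        by_contra hk
        split_ifs at h1 <;> omega
      have := (lt_conj_iff f (i := ra) (j := v - 1)).mp (by omega)
      omega
  have hadd : f.IsAddableRow ra := by
    rcases Nat.eq_zero_or_pos ra with h0 | h0
    · exact Or.inl h0
    · right
      have h7 : ra - 1 < f.conj v := by omega
      have := (lt_conj_iff f).mp h7
      omega
  have hrcra : rc ≠ ra := by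
    rcases lt_trichotomy u v with h | h | h
    · have := conj_antitone g (show u ≤ v by omega)
      omega
    · exact absurd h huv
    · have := conj_antitone f (show v ≤ u by omega)
      omega
  have hgf : g ≠ f := by
    intro he; subst he; omega
  refine ⟨rc, ra, hrem, hadd, hrcra, hgf, ?_⟩
  have hpc : f.parts rc = u + 1 := by omega
  have hpa : f.parts ra = v := by omega
  apply eq_of_FC_eq (rows_pos g)
  · intro x hx
    rw [transferRows, Multiset.mem_add] at hx
    rcases hx with hx | hx
    · exact rows_pos f x (Multiset.mem_of_mem_erase (Multiset.mem_of_mem_erase hx))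
    · exact (Multiset.mem_filter.mp hx).2
  · intro j
    have hD := FC_transferRows f hrcra (by omega) j
    rw [hpc, hpa] at hD
    have hHj := H j
    rw [conj_eq_FC g] at hHj
    split_ifs at hD hHj <;> omega

lemma ind_analysis {u₁ v₁ u₂ v₂ p q : ℕ} (hpq : p ≠ q) (h1 : u₁ ≠ v₁) (h2 : u₂ ≠ v₂)
    (hu : u₁ ≠ u₂) (hv : v₁ ≠ v₂)
    (H : ∀ j : ℕ, (if j = v₂ then 1 else 0) + (if j = p then 1 else 0)
          + (if j = u₁ then 1 else 0)
        = (if j = v₁ then 1 else 0) + (if j = q then 1 else 0)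
          + (if j = u₂ then (1:ℕ) else 0)) : False := by
  have hq1 : u₁ = q := by by_contra hc; have h := H u₁; split_ifs at h <;> omega
  have hq2 : v₂ = q := by by_contra hc; have h := H v₂; split_ifs at h <;> omega
  have hp1 : u₂ = p := by by_contra hc; have h := H u₂; split_ifs at h <;> omega
  have hp2 : v₁ = p := by by_contra hc; have h := H v₁; split_ifs at h <;> omega
  have h := H p
  split_ifs at h <;> omega

end NPartition
/-- Let `μ₁ = λ(c₁ → a₁)` and `μ₂ = λ(c₂ → a₂)` be two distinct
neighbors of `λ` in `G_n`.  Then `λ, μ₁, μ₂` span a triangle in `G_n` if and only if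
`c₁ = c₂` or `a₁ = a₂`. -/
theorem triangle_classification {n : ℕ} (f g₁ g₂ : NPartition n) (rc₁ ra₁ rc₂ ra₂ : ℕ)
    (h₁ : NPartition.IsTransfer f g₁ rc₁ ra₁)
    (h₂ : NPartition.IsTransfer f g₂ rc₂ ra₂)
    (hne : g₁ ≠ g₂) :
    (NPartition.Adj f g₁ ∧ NPartition.Adj f g₂ ∧ NPartition.Adj g₁ g₂) ↔
      (rc₁ = rc₂ ∨ ra₁ = ra₂) := by
  have rel1 := NPartition.conj_rel_of_transfer h₁
  have rel2 := NPartition.conj_rel_of_transfer h₂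
  have huv1 := NPartition.transfer_u_ne_v h₁
  have huv2 := NPartition.transfer_u_ne_v h₂
  have hc1 : 1 ≤ f.parts rc₁ := by
    have := h₁.1; rw [NPartition.IsRemovableRow] at this; omega
  have hc2 : 1 ≤ f.parts rc₂ := by
    have := h₂.1; rw [NPartition.IsRemovableRow] at this; omega
  have hne' : ¬(f.parts rc₁ - 1 = f.parts rc₂ - 1 ∧ f.parts ra₁ = f.parts ra₂) := by
    rintro ⟨ha, hb⟩
    apply hne
    apply NPartition.conj_ext
    intro j
    have a1 := rel1 j
    have a2 := rel2 j
    rw [ha, hb] at a1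
    split_ifs at a1 a2 <;> omega
  constructor
  · rintro ⟨-, -, hadj⟩
    by_contra hcon
    push_neg at hcon
    obtain ⟨hrc, hra⟩ := hcon
    have hu : f.parts rc₁ - 1 ≠ f.parts rc₂ - 1 := by
      intro he
      exact hrc (NPartition.removable_inj h₁.1 h₂.1 (by omega))
    have hv : f.parts ra₁ ≠ f.parts ra₂ := by
      intro he
      exact hra (NPartition.addable_inj h₁.2.1 h₂.2.1 he)
    rcases hadj with ⟨rcx, rax, ht⟩ | ⟨rcx, rax, ht⟩
    · have rel3 := NPartition.conj_rel_of_transfer ht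
      have hpq := NPartition.transfer_u_ne_v ht
      refine NPartition.ind_analysis hpq huv1 huv2 hu hv ?_
      intro j
      have a1 := rel1 j
      have a2 := rel2 j
      have a3 := rel3 j
      split_ifs at a1 a2 a3 ⊢ <;> omega
    · have rel3 := NPartition.conj_rel_of_transfer ht
      have hpq := NPartition.transfer_u_ne_v ht
      refine NPartition.ind_analysis hpq.symm huv1 huv2 hu hv ?_
      intro j
      have a1 := rel1 j
      have a2 := rel2 j
      have a3 := rel3 j
      split_ifs at a1 a2 a3 ⊢ <;> omega
  · intro h
    refine ⟨Or.inl ⟨_, _, h₁⟩, Or.inl ⟨_, _, h₂⟩, ?_⟩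
    rcases h with hc | ha
    · have hu12 : f.parts rc₁ - 1 = f.parts rc₂ - 1 := by rw [hc]
      have hv12 : f.parts ra₁ ≠ f.parts ra₂ := fun hv => hne' ⟨hu12, hv⟩
      have H : ∀ j, g₂.conj j + (if j = f.parts ra₁ then 1 else 0)
          = g₁.conj j + (if j = f.parts ra₂ then 1 else 0) := by
        intro j
        have a1 := rel1 j
        have a2 := rel2 j
        rw [← hu12] at a2
        split_ifs at a1 a2 ⊢ <;> omega
      obtain ⟨rc, ra, ht⟩ := NPartition.transfer_of_conj_rel hv12 H
      exact Or.inl ⟨rc, ra, ht⟩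
    · have hv12 : f.parts ra₁ = f.parts ra₂ := by rw [ha]
      have hu12 : f.parts rc₁ - 1 ≠ f.parts rc₂ - 1 := fun hu => hne' ⟨hu, hv12⟩
      have H : ∀ j, g₁.conj j + (if j = f.parts rc₁ - 1 then 1 else 0)
          = g₂.conj j + (if j = f.parts rc₂ - 1 then 1 else 0) := by
        intro j
        have a1 := rel1 j
        have a2 := rel2 j
        rw [← hv12] at a2
        split_ifs at a1 a2 ⊢ <;> omega
      obtain ⟨rc, ra, ht⟩ := NPartition.transfer_of_conj_rel hu12 H
      exact Or.inr ⟨rc, ra, ht⟩
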